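/- Let p be a prime and let m, t ≥ 1 be integers. For each 1 ≤ i ≤ t, let G_i be a finite cyclic group of order n_i with fixed generator g_i, and assume p^m divides n_i. Set G := G₁ × ⋯ × G_t. Let A be a commutative ring with p^m·1_A = 0, so that A is canonically a ℤ/p^m-algebra. For each i, define log_{g_i} : G → ℤ/p^m by log_{g_i}(σ) := k mod p^m whenever the i-th component of σ equals g_i^k (this is well defined because p^m divides n_i). In the group algebra A[G], set D_i := Σ_{k=0}^{n_i−1} k·g_i^k (viewing g_i as the corresponding element of G), D := D₁·D₂⋯D_t, and N := Σ_{σ∈G} σ. Let c = Σ_{σ∈G} a_σ·σ ∈ A[G] with coefficients a_σ ∈ A, and assume that (g_i − 1)·D·c = 0 in A[G] for every 1 ≤ i ≤ t. Then D·c = (−1)^t · ( Σ_{σ∈G} a_σ · Π_{i=1}^{t} log_{g_i}(σ) ) · N, where the product Π_{i} log_{g_i}(σ) ∈ ℤ/p^m acts on A via the ℤ/p^m-algebra structure. -/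

import Mathlib

/-- Lemma 4.4 of the paper: if `D·c` is invariant under each `g_i`, then `D·c` equals
`(-1)^t (Σ_σ a_σ Π_i log_{g_i}(σ)) · N` in the group algebra `A[G₁ × ⋯ × G_t]`. -/
theorem kolyvagin_derivative_leading_coefficient
    (p : ℕ) (hp : p.Prime) (m t : ℕ) (hm : 1 ≤ m) (ht : 1 ≤ t)
    (Gr : Fin t → Type*) [∀ i, CommGroup (Gr i)] [∀ i, Fintype (Gr i)]
    (n : Fin t → ℕ) (g : ∀ i, Gr i)
    (hgen : ∀ i, ∀ x : Gr i, x ∈ Subgroup.zpowers (g i))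
    (hcard : ∀ i, Fintype.card (Gr i) = n i)
    (hdvd : ∀ i, p ^ m ∣ n i)
    (A : Type*) [CommRing A] [Algebra (ZMod (p ^ m)) A]
    (logg : ∀ i : Fin t, Gr i → ZMod (p ^ m))
    (hlog : ∀ i (k : ℕ), logg i (g i ^ k) = (k : ZMod (p ^ m)))
    (a : (∀ i, Gr i) → A)
    (hinv : ∀ i : Fin t,
      (MonoidAlgebra.of A (∀ i, Gr i) (Pi.mulSingle i (g i)) - 1) *
        ((∏ i, ∑ k ∈ Finset.range (n i),
            (k : A) • MonoidAlgebra.of A (∀ i, Gr i) (Pi.mulSingle i (g i ^ k))) *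
          (∑ σ : ∀ i, Gr i, a σ • MonoidAlgebra.of A (∀ i, Gr i) σ)) = 0) :
    (∏ i, ∑ k ∈ Finset.range (n i),
        (k : A) • MonoidAlgebra.of A (∀ i, Gr i) (Pi.mulSingle i (g i ^ k))) *
      (∑ σ : ∀ i, Gr i, a σ • MonoidAlgebra.of A (∀ i, Gr i) σ) =
    ((-1 : A) ^ t *
        ∑ σ : ∀ i, Gr i, a σ * algebraMap (ZMod (p ^ m)) A (∏ i, logg i (σ i))) •
      (∑ σ : ∀ i, Gr i, MonoidAlgebra.of A (∀ i, Gr i) σ) := by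
  classical
  set x : MonoidAlgebra A (∀ i, Gr i) :=
    (∏ i, ∑ k ∈ Finset.range (n i),
        (k : A) • MonoidAlgebra.of A (∀ i, Gr i) (Pi.mulSingle i (g i ^ k))) *
      (∑ σ : (∀ i, Gr i), a σ • MonoidAlgebra.of A (∀ i, Gr i) σ) with hxdef
  have horder : ∀ i, orderOf (g i) = n i := fun i =>
    (orderOf_eq_card_of_forall_mem_zpowers (hgen i)).trans
      (Nat.card_eq_fintype_card.trans (hcard i))
  have hnpos : ∀ i, 0 < n i := fun i => (hcard i) ▸ Fintype.card_pos
  have hgn : ∀ i, g i ^ (n i) = 1 := fun i => by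
    rw [← horder i]; exact pow_orderOf_eq_one (g i)
  -- Step 1: x is invariant under multiplication by each generator
  have hinv' : ∀ i, MonoidAlgebra.of A (∀ i, Gr i) (Pi.mulSingle i (g i)) * x = x := by
    intro i
    have := hinv i
    rwa [sub_mul, one_mul, sub_eq_zero] at this
  have hpow : ∀ i (k : ℕ), MonoidAlgebra.of A (∀ i, Gr i) (Pi.mulSingle i (g i ^ k)) * x = x := by
    intro i k
    induction k with
    | zero => rw [pow_zero, Pi.mulSingle_one, map_one, one_mul]
    | succ k ih =>
        rw [pow_succ, Pi.mulSingle_mul, map_mul, mul_assoc, hinv' i]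
        exact ih
  have hsig : ∀ σ : (∀ i, Gr i), MonoidAlgebra.of A (∀ i, Gr i) σ * x = x := by
    intro σ
    have hex : ∀ i, ∃ k : ℕ, g i ^ k = σ i := by
      intro i
      exact (Submonoid.mem_powers_iff _ _).1 (mem_powers_iff_mem_zpowers.2 (hgen i (σ i)))
    choose k hk using hex
    have hσ : σ = ∏ i, Pi.mulSingle i (g i ^ k i) := by
      conv_lhs => rw [← Finset.univ_prod_mulSingle σ]
      exact Finset.prod_congr rfl fun i _ => by rw [hk i]
    rw [hσ, map_prod]
    refine Finset.prod_induction _ (fun y => y * x = x) ?_ (one_mul x) ?_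
    · intro u v hu hv; rw [mul_assoc, hv, hu]
    · intro i _; exact hpow i (k i)
  have hconst : ∀ τ : (∀ i, Gr i), x.coeff τ = x.coeff 1 := by
    intro τ
    conv_lhs => rw [← hsig τ]
    rw [MonoidAlgebra.of_apply, MonoidAlgebra.single_mul_apply, inv_mul_cancel, one_mul]
  -- Step 3: compute x as an explicit double sum of singles
  have hc : (∑ σ : (∀ i, Gr i), a σ • MonoidAlgebra.of A (∀ i, Gr i) σ)
      = ∑ σ : (∀ i, Gr i), MonoidAlgebra.single σ (a σ) := by
    refine Finset.sum_congr rfl fun σ _ => ?_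
    rw [MonoidAlgebra.of_apply, MonoidAlgebra.smul_single', mul_one]
  have hD : (∏ i, ∑ k ∈ Finset.range (n i),
        (k : A) • MonoidAlgebra.of A (∀ i, Gr i) (Pi.mulSingle i (g i ^ k)))
      = ∑ κ ∈ Fintype.piFinset (fun i => Finset.range (n i)),
          MonoidAlgebra.single (fun i => g i ^ κ i) (∏ i, (κ i : A)) := by
    rw [Finset.prod_univ_sum]
    refine Finset.sum_congr rfl fun κ _ => ?_
    have h1 : ∀ i : Fin t, (κ i : A) • MonoidAlgebra.of A (∀ i, Gr i) (Pi.mulSingle i (g i ^ κ i))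
        = MonoidAlgebra.single (Pi.mulSingle i (g i ^ κ i)) (κ i : A) := fun i => by
      rw [MonoidAlgebra.of_apply, MonoidAlgebra.smul_single', mul_one]
    simp_rw [h1]
    rw [MonoidAlgebra.prod_single, Finset.univ_prod_mulSingle]
  have hxsum : x = ∑ κ ∈ Fintype.piFinset (fun i => Finset.range (n i)),
      ∑ σ : (∀ i, Gr i), MonoidAlgebra.single ((fun i => g i ^ κ i) * σ) ((∏ i, (κ i : A)) * a σ) := by
    rw [hxdef, hc, hD, Finset.sum_mul_sum]
    exact Finset.sum_congr rfl fun κ _ => Finset.sum_congr rfl fun σ _ =>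
      MonoidAlgebra.single_mul_single _ _ _ _
  have hx1 : x.coeff 1 = ∑ κ ∈ Fintype.piFinset (fun i => Finset.range (n i)),
      (∏ i, (κ i : A)) * a (fun i => (g i ^ κ i)⁻¹) := by
    rw [hxsum, MonoidAlgebra.coeff_sum, Finsupp.finset_sum_apply]
    refine Finset.sum_congr rfl fun κ _ => ?_
    rw [MonoidAlgebra.coeff_sum, Finsupp.finset_sum_apply]
    rw [Finset.sum_eq_single ((fun i => g i ^ κ i)⁻¹ : (∀ i, Gr i))]
    · rw [show ((fun i => g i ^ κ i) * ((fun i => g i ^ κ i)⁻¹ : (∀ i, Gr i))) = 1 from mul_inv_cancel _]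
      simp only [MonoidAlgebra.coeff_single, Finsupp.single_apply, if_pos rfl]
      rfl
    · intro σ _ hσ
      rw [MonoidAlgebra.coeff_single]
      refine Finsupp.single_eq_of_ne ?_
      intro hcon
      exact hσ (eq_inv_of_mul_eq_one_right hcon.symm)
    · intro h; exact absurd (Finset.mem_univ _) h
  -- the scalar on the RHS equals x 1
  have hNcast : ∀ i, ((n i : ZMod (p ^ m))) = 0 := fun i =>
    (ZMod.natCast_eq_zero_iff _ _).2 (hdvd i)
  have hloginv : ∀ i (k : ℕ), k < n i → logg i ((g i ^ k)⁻¹) = -(k : ZMod (p ^ m)) := by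
    intro i k hkn
    have hinveq : (g i ^ k)⁻¹ = g i ^ (n i - k) := by
      refine inv_eq_of_mul_eq_one_left ?_
      rw [← pow_add, Nat.sub_add_cancel hkn.le, hgn i]
    rw [hinveq, hlog, Nat.cast_sub hkn.le, hNcast, zero_sub]
  have hscal : ((-1 : A) ^ t *
      ∑ σ : (∀ i, Gr i), a σ * algebraMap (ZMod (p ^ m)) A (∏ i, logg i (σ i))) = x.coeff 1 := by
    have hre : (∑ σ : (∀ i, Gr i), a σ * algebraMap (ZMod (p ^ m)) A (∏ i, logg i (σ i)))
        = ∑ κ ∈ Fintype.piFinset (fun i => Finset.range (n i)),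
            a (fun i => (g i ^ κ i)⁻¹) * ((-1 : A) ^ t * ∏ i, (κ i : A)) := by
      refine (Finset.sum_bij (fun κ _ => (fun i => (g i ^ κ i)⁻¹ : (∀ i, Gr i)))
        (fun κ _ => Finset.mem_univ _) ?_ ?_ ?_).symm
      · intro κ hκ κ' hκ' h
        funext i
        have hi : κ i < n i := by
          simpa using Fintype.mem_piFinset.1 hκ i
        have hi' : κ' i < n i := by
          simpa using Fintype.mem_piFinset.1 hκ' i
        have : (g i ^ κ i)⁻¹ = (g i ^ κ' i)⁻¹ := congrFun h i
        have := inv_injective this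
        exact pow_injOn_Iio_orderOf (by rw [horder i]; exact hi)
          (by rw [horder i]; exact hi') this
      · intro σ _
        have hex : ∀ i, ∃ k : ℕ, g i ^ k = (σ i)⁻¹ := fun i =>
          (Submonoid.mem_powers_iff _ _).1 (mem_powers_iff_mem_zpowers.2 (hgen i (σ i)⁻¹))
        choose k hk using hex
        refine ⟨fun i => k i % n i, Fintype.mem_piFinset.2 fun i =>
          Finset.mem_range.2 (Nat.mod_lt _ (hnpos i)), ?_⟩
        funext i
        show (g i ^ (k i % n i))⁻¹ = σ i
        rw [show g i ^ (k i % n i) = g i ^ k i by rw [← horder i]; exact pow_mod_orderOf _ _,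
          hk i, inv_inv]
      · intro κ hκ
        have hterm : (∏ i, logg i (((g i ^ κ i)⁻¹ : Gr i)))
            = ∏ i, (-(κ i : ZMod (p ^ m))) := by
          refine Finset.prod_congr rfl fun i _ => ?_
          exact hloginv i (κ i) (by simpa using Fintype.mem_piFinset.1 hκ i)
        rw [hterm]
        congr 1
        rw [map_prod]
        have : ∀ i : Fin t, algebraMap (ZMod (p ^ m)) A (-(κ i : ZMod (p ^ m)))
            = (-1 : A) * (κ i : A) := fun i => by
          rw [map_neg, map_natCast, neg_eq_neg_one_mul]
        simp_rw [this]
        rw [Finset.prod_mul_distrib, Finset.prod_const, Finset.card_univ, Fintype.card_fin]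
    rw [hre, Finset.mul_sum, hx1]
    refine Finset.sum_congr rfl fun κ _ => ?_
    ring_nf
    rw [show ((-1 : A) ^ (t * 2)) = 1 by
      rw [mul_comm t 2, pow_mul]; norm_num]
    rw [mul_one]
  -- Final assembly
  rw [hscal]
  refine MonoidAlgebra.ext (Finsupp.ext fun τ => ?_)
  rw [MonoidAlgebra.coeff_smul, Finsupp.smul_apply]
  have hN : (∑ σ : (∀ i, Gr i), MonoidAlgebra.of A (∀ i, Gr i) σ).coeff τ = 1 := by
    rw [MonoidAlgebra.coeff_sum, Finsupp.finset_sum_apply]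
    simp_rw [MonoidAlgebra.of_apply, MonoidAlgebra.coeff_single, Finsupp.single_apply]
    rw [Finset.sum_ite_eq' (Finset.univ) τ (fun _ => (1 : A))]
    simp
  rw [hN, smul_eq_mul, mul_one]
  exact hconst τ
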